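/- Let f₁ : Π₁ → Γ and f₂ : Π₂ → Γ be bounded homomorphisms of (possibly noncommutative) nonarchimedean Banach rings such that the sum map Π₁ ⊕ Π₂ → Γ, (a,b) ↦ f₁(a) + f₂(b), is strictly surjective. Then there exists a constant c > 0 such that for every n ≥ 1 and every matrix I ∈ GL_n(Γ) with ‖I − 1‖ ≤ c, there exist invertible matrices I₁ ∈ GL_n(Π₁) and I₂ ∈ GL_n(Π₂) with I = f₁(I₁)·f₂(I₂). -/

import Mathlib

namespace Stmt5Aux

open IsUltrametricDist Filter

attribute [local instance] Matrix.normedAddCommGroup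

variable {R S : Type*} [NormedRing R] [NormedRing S] {n : ℕ}

lemma mnorm_add_le_max [IsUltrametricDist R] (A B : Matrix (Fin n) (Fin n) R) :
    ‖A + B‖ ≤ max ‖A‖ ‖B‖ := by
  refine (Matrix.norm_le_iff (le_max_of_le_left (norm_nonneg _))).2 fun i j => ?_
  calc ‖(A + B) i j‖ = ‖A i j + B i j‖ := rfl
    _ ≤ max ‖A i j‖ ‖B i j‖ := norm_add_le_max _ _
    _ ≤ max ‖A‖ ‖B‖ :=
      max_le_max (Matrix.norm_entry_le_entrywise_sup_norm A)
        (Matrix.norm_entry_le_entrywise_sup_norm B)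

lemma mnorm_mul_le [IsUltrametricDist R] (A B : Matrix (Fin n) (Fin n) R) :
    ‖A * B‖ ≤ ‖A‖ * ‖B‖ := by
  refine (Matrix.norm_le_iff (mul_nonneg (norm_nonneg _) (norm_nonneg _))).2 fun i j => ?_
  rw [Matrix.mul_apply]
  refine norm_sum_le_of_forall_le_of_nonneg (mul_nonneg (norm_nonneg _) (norm_nonneg _))
    fun k _ => ?_
  exact (norm_mul_le _ _).trans (mul_le_mul (Matrix.norm_entry_le_entrywise_sup_norm A)
    (Matrix.norm_entry_le_entrywise_sup_norm B) (norm_nonneg _) (norm_nonneg _))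

@[reducible]
noncomputable def matNR (R : Type*) [NormedRing R] [IsUltrametricDist R] (n : ℕ) :
    NormedRing (Matrix (Fin n) (Fin n) R) :=
  { Matrix.normedAddCommGroup, (inferInstance : Ring (Matrix (Fin n) (Fin n) R)) with
    norm_mul_le := mnorm_mul_le }

lemma mnorm_map_le (f : R →+* S) {C : ℝ} (hC : 0 ≤ C) (hf : ∀ x, ‖f x‖ ≤ C * ‖x‖)
    (A : Matrix (Fin n) (Fin n) R) : ‖A.map f‖ ≤ C * ‖A‖ := by
  refine (Matrix.norm_le_iff (mul_nonneg hC (norm_nonneg _))).2 fun i j => ?_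
  exact (hf _).trans (mul_le_mul_of_nonneg_left (Matrix.norm_entry_le_entrywise_sup_norm A) hC)

lemma mnorm_one_le : ‖(1 : Matrix (Fin n) (Fin n) R)‖ ≤ max ‖(1 : R)‖ 1 := by
  refine (Matrix.norm_le_iff (le_max_of_le_right zero_le_one)).2 fun i j => ?_
  rw [Matrix.one_apply]
  split
  · exact le_max_left _ _
  · simp


set_option maxHeartbeats 1000000 in
theorem main {R₁ R₂ G : Type*} [NormedRing R₁] [NormedRing R₂] [NormedRing G]
    [CompleteSpace R₁] [CompleteSpace R₂]
    [IsUltrametricDist R₁] [IsUltrametricDist R₂] [IsUltrametricDist G]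
    (f₁ : R₁ →+* G) (f₂ : R₂ →+* G) (K c : ℝ) (hK : 1 ≤ K)
    (hf₁ : ∀ x, ‖f₁ x‖ ≤ K * ‖x‖) (hf₂ : ∀ x, ‖f₂ x‖ ≤ K * ‖x‖)
    (hlift : ∀ γ : G, ∃ a b, f₁ a + f₂ b = γ ∧ ‖a‖ ≤ K * ‖γ‖ ∧ ‖b‖ ≤ K * ‖γ‖)
    (hc : 0 < c) (hc1 : c ≤ 1) (hdc : K ^ 6 * c ≤ 1 / 2)
    (hcT₁ : K * c * max ‖(1 : R₁)‖ 1 ≤ 1 / 2) (hcT₂ : K * c * max ‖(1 : R₂)‖ 1 ≤ 1 / 2)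
    (n : ℕ) (M : Matrix (Fin n) (Fin n) G)
    (hM : ∀ i j, ‖(M - 1) i j‖ ≤ c) :
    ∃ (I₁ : (Matrix (Fin n) (Fin n) R₁)ˣ) (I₂ : (Matrix (Fin n) (Fin n) R₂)ˣ),
      M = (I₁.val.map f₁) * (I₂.val.map f₂) := by
  have hKpos : (0 : ℝ) < K := lt_of_lt_of_le one_pos hK
  have hKsq : (1 : ℝ) ≤ K ^ 2 := by nlinarith
  letI NR₁ : NormedRing (Matrix (Fin n) (Fin n) R₁) := matNR R₁ n
  letI NR₂ : NormedRing (Matrix (Fin n) (Fin n) R₂) := matNR R₂ n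
  letI NRG : NormedRing (Matrix (Fin n) (Fin n) G) := matNR G n
  have hKc : K * c ≤ 1 / 2 := by
    have h1 : (1 : ℝ) ≤ max ‖(1 : R₁)‖ 1 := le_max_right _ _
    nlinarith [mul_pos hKpos hc]
  -- matrix-level lifting
  have lift' : ∀ E : Matrix (Fin n) (Fin n) G,
      ∃ (A : Matrix (Fin n) (Fin n) R₁) (B : Matrix (Fin n) (Fin n) R₂),
        A.map f₁ + B.map f₂ = E ∧ ‖A‖ ≤ K * ‖E‖ ∧ ‖B‖ ≤ K * ‖E‖ := by
    intro E
    choose a b hab ha hb using hlift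
    refine ⟨Matrix.of fun i j => a (E i j), Matrix.of fun i j => b (E i j), ?_, ?_, ?_⟩
    · ext i j
      simpa using hab (E i j)
    · refine (Matrix.norm_le_iff (mul_nonneg hKpos.le (norm_nonneg _))).2 fun i j => ?_
      exact (ha _).trans (mul_le_mul_of_nonneg_left
        (Matrix.norm_entry_le_entrywise_sup_norm E) hKpos.le)
    · refine (Matrix.norm_le_iff (mul_nonneg hKpos.le (norm_nonneg _))).2 fun i j => ?_
      exact (hb _).trans (mul_le_mul_of_nonneg_left
        (Matrix.norm_entry_le_entrywise_sup_norm E) hKpos.le)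
  choose A B hAB hA hB using lift'
  set step : Matrix (Fin n) (Fin n) G → Matrix (Fin n) (Fin n) G :=
    fun X => (1 - (A (X - 1)).map f₁) * X * (1 - (B (X - 1)).map f₂) with hstepdef
  -- the quadratic contraction estimate
  have hstep : ∀ X : Matrix (Fin n) (Fin n) G, ‖X - 1‖ ≤ 1 →
      ‖step X - 1‖ ≤ K ^ 6 * ‖X - 1‖ ^ 2 := by
    intro X hX1
    set E := X - 1 with hE
    set U := (A E).map f₁ with hU
    set V := (B E).map f₂ with hV
    have hUV : U + V = E := hAB E
    have hid : step X - 1 = -(U * E) + -(E * V) + U * V + U * E * V := by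
      have hX : X = 1 + E := by rw [hE]; abel
      show (1 - U) * X * (1 - V) - 1 = _
      rw [hX, ← hUV]
      noncomm_ring
    have hUb : ‖U‖ ≤ K ^ 2 * ‖E‖ := by
      calc ‖U‖ ≤ K * ‖A E‖ := mnorm_map_le f₁ hKpos.le hf₁ _
        _ ≤ K * (K * ‖E‖) := mul_le_mul_of_nonneg_left (hA E) hKpos.le
        _ = K ^ 2 * ‖E‖ := by ring
    have hVb : ‖V‖ ≤ K ^ 2 * ‖E‖ := by
      calc ‖V‖ ≤ K * ‖B E‖ := mnorm_map_le f₂ hKpos.le hf₂ _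
        _ ≤ K * (K * ‖E‖) := mul_le_mul_of_nonneg_left (hB E) hKpos.le
        _ = K ^ 2 * ‖E‖ := by ring
    have hEb : ‖E‖ ≤ K ^ 2 * ‖E‖ := by nlinarith [norm_nonneg E]
    have hK2 : (0:ℝ) ≤ K ^ 2 * ‖E‖ := by positivity
    have hpow : K ^ 4 ≤ K ^ 6 := by nlinarith [pow_nonneg hKpos.le 4, sq_nonneg K]
    have h2 : ∀ P Q : Matrix (Fin n) (Fin n) G, ‖P‖ ≤ K ^ 2 * ‖E‖ → ‖Q‖ ≤ K ^ 2 * ‖E‖ →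
        ‖P * Q‖ ≤ K ^ 6 * ‖E‖ ^ 2 := by
      intro P Q hP hQ
      calc ‖P * Q‖ ≤ ‖P‖ * ‖Q‖ := norm_mul_le _ _
        _ ≤ (K ^ 2 * ‖E‖) * (K ^ 2 * ‖E‖) := mul_le_mul hP hQ (norm_nonneg _) hK2
        _ = K ^ 4 * ‖E‖ ^ 2 := by ring
        _ ≤ K ^ 6 * ‖E‖ ^ 2 := mul_le_mul_of_nonneg_right hpow (sq_nonneg _)
    have h3 : ‖U * E * V‖ ≤ K ^ 6 * ‖E‖ ^ 2 := by
      calc ‖U * E * V‖ ≤ ‖U * E‖ * ‖V‖ := norm_mul_le _ _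
        _ ≤ (‖U‖ * ‖E‖) * ‖V‖ :=
            mul_le_mul_of_nonneg_right (norm_mul_le _ _) (norm_nonneg _)
        _ ≤ ((K ^ 2 * ‖E‖) * (K ^ 2 * ‖E‖)) * (K ^ 2 * ‖E‖) := by
            exact mul_le_mul (mul_le_mul hUb hEb (norm_nonneg _) hK2) hVb (norm_nonneg _)
              (by positivity)
        _ = (K ^ 6 * ‖E‖ ^ 2) * ‖E‖ := by ring
        _ ≤ (K ^ 6 * ‖E‖ ^ 2) * 1 := mul_le_mul_of_nonneg_left hX1 (by positivity)
        _ = K ^ 6 * ‖E‖ ^ 2 := mul_one _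
    have hmax : ∀ P Q : Matrix (Fin n) (Fin n) G, ‖P‖ ≤ K ^ 6 * ‖E‖ ^ 2 →
        ‖Q‖ ≤ K ^ 6 * ‖E‖ ^ 2 → ‖P + Q‖ ≤ K ^ 6 * ‖E‖ ^ 2 := fun P Q hP hQ =>
      (mnorm_add_le_max P Q).trans (max_le hP hQ)
    rw [hid]
    refine hmax _ _ (hmax _ _ (hmax _ _ ?_ ?_) ?_) h3
    · rw [norm_neg]; exact h2 _ _ hUb hEb
    · rw [norm_neg]; exact h2 _ _ hEb hVb
    · exact h2 _ _ hUb hVb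
  -- the iteration
  set Ms : ℕ → Matrix (Fin n) (Fin n) G := fun k => step^[k] M with hMsdef
  have hMs0 : Ms 0 = M := rfl
  have hMsS : ∀ k, Ms (k + 1) = step (Ms k) := fun k => Function.iterate_succ_apply' step k M
  have half_pos : (0:ℝ) < 1/2 := by norm_num
  have hMk : ∀ k, ‖Ms k - 1‖ ≤ c * (1/2) ^ k := by
    intro k
    induction k with
    | zero =>
      simpa [hMs0] using (Matrix.norm_le_iff hc.le).2 hM
    | succ k ih =>
      have hpowle : ((1:ℝ)/2) ^ k ≤ 1 := pow_le_one₀ (by norm_num) (by norm_num)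
      have hle1 : ‖Ms k - 1‖ ≤ 1 := ih.trans (by nlinarith)
      have hlec : ‖Ms k - 1‖ ≤ c := ih.trans (by nlinarith)
      calc ‖Ms (k+1) - 1‖ = ‖step (Ms k) - 1‖ := by rw [hMsS]
        _ ≤ K ^ 6 * ‖Ms k - 1‖ ^ 2 := hstep _ hle1
        _ ≤ K ^ 6 * (c * ((1/2)^k) * c) := by
            refine mul_le_mul_of_nonneg_left ?_ (by positivity)
            calc ‖Ms k - 1‖ ^ 2 = ‖Ms k - 1‖ * ‖Ms k - 1‖ := sq ‖Ms k - 1‖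
              _ ≤ (c * (1/2)^k) * c := mul_le_mul ih hlec (norm_nonneg _) (by positivity)
        _ ≤ c * (1/2) ^ (k+1) := by
            calc K ^ 6 * (c * ((1/2)^k) * c) = (K^6 * c) * (c * (1/2)^k) := by ring
              _ ≤ (1/2) * (c * (1/2)^k) := mul_le_mul_of_nonneg_right hdc (by positivity)
              _ = c * (1/2)^(k+1) := by ring
  have hMkc : ∀ k, ‖Ms k - 1‖ ≤ c := fun k => (hMk k).trans
    (by nlinarith [pow_le_one₀ (le_of_lt half_pos) (show (1:ℝ)/2 ≤ 1 by norm_num) (n := k)])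
  have hAk : ∀ k, ‖A (Ms k - 1)‖ ≤ K * c * (1/2)^k := by
    intro k
    calc ‖A (Ms k - 1)‖ ≤ K * ‖Ms k - 1‖ := hA _
      _ ≤ K * (c * (1/2)^k) := mul_le_mul_of_nonneg_left (hMk k) hKpos.le
      _ = K * c * (1/2)^k := by ring
  have hBk : ∀ k, ‖B (Ms k - 1)‖ ≤ K * c * (1/2)^k := by
    intro k
    calc ‖B (Ms k - 1)‖ ≤ K * ‖Ms k - 1‖ := hB _
      _ ≤ K * (c * (1/2)^k) := mul_le_mul_of_nonneg_left (hMk k) hKpos.le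
      _ = K * c * (1/2)^k := by ring
  have hAk1 : ∀ k, ‖A (Ms k - 1)‖ ≤ 1 := by
    intro k
    refine (hAk k).trans ?_
    nlinarith [pow_le_one₀ (le_of_lt half_pos) (show (1:ℝ)/2 ≤ 1 by norm_num) (n := k),
      pow_nonneg (le_of_lt half_pos) k, mul_pos hKpos hc]
  have hBk1 : ∀ k, ‖B (Ms k - 1)‖ ≤ 1 := by
    intro k
    refine (hBk k).trans ?_
    nlinarith [pow_le_one₀ (le_of_lt half_pos) (show (1:ℝ)/2 ≤ 1 by norm_num) (n := k),
      pow_nonneg (le_of_lt half_pos) k, mul_pos hKpos hc]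
  -- partial products
  set Ls : ℕ → Matrix (Fin n) (Fin n) R₁ :=
    fun k => Nat.rec 1 (fun j Lj => (1 - A (Ms j - 1)) * Lj) k with hLsdef
  set Rs : ℕ → Matrix (Fin n) (Fin n) R₂ :=
    fun k => Nat.rec 1 (fun j Rj => Rj * (1 - B (Ms j - 1))) k with hRsdef
  have hLs0 : Ls 0 = 1 := rfl
  have hLsS : ∀ k, Ls (k + 1) = (1 - A (Ms k - 1)) * Ls k := fun k => rfl
  have hRs0 : Rs 0 = 1 := rfl
  have hRsS : ∀ k, Rs (k + 1) = Rs k * (1 - B (Ms k - 1)) := fun k => rfl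
  set T₁ : ℝ := max ‖(1 : R₁)‖ 1 with hT₁def
  set T₂ : ℝ := max ‖(1 : R₂)‖ 1 with hT₂def
  have hT₁ : (1:ℝ) ≤ T₁ := le_max_right _ _
  have hT₂ : (1:ℝ) ≤ T₂ := le_max_right _ _
  have hLn : ∀ k, ‖Ls k‖ ≤ T₁ := by
    intro k
    induction k with
    | zero => exact hLs0 ▸ mnorm_one_le
    | succ k ih =>
      have : Ls (k+1) = Ls k + -(A (Ms k - 1) * Ls k) := by
        rw [hLsS, sub_mul, one_mul, sub_eq_add_neg]
      rw [this]
      refine (mnorm_add_le_max _ _).trans (max_le ih ?_)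
      rw [norm_neg]
      calc ‖A (Ms k - 1) * Ls k‖ ≤ ‖A (Ms k - 1)‖ * ‖Ls k‖ := norm_mul_le _ _
        _ ≤ 1 * T₁ := mul_le_mul (hAk1 k) ih (norm_nonneg _) zero_le_one
        _ = T₁ := one_mul _
  have hRn : ∀ k, ‖Rs k‖ ≤ T₂ := by
    intro k
    induction k with
    | zero => exact hRs0 ▸ mnorm_one_le
    | succ k ih =>
      have : Rs (k+1) = Rs k + -(Rs k * B (Ms k - 1)) := by
        rw [hRsS, mul_sub, mul_one, sub_eq_add_neg]
      rw [this]
      refine (mnorm_add_le_max _ _).trans (max_le ih ?_)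
      rw [norm_neg]
      calc ‖Rs k * B (Ms k - 1)‖ ≤ ‖Rs k‖ * ‖B (Ms k - 1)‖ := norm_mul_le _ _
        _ ≤ T₂ * 1 := mul_le_mul ih (hBk1 k) (norm_nonneg _) (by linarith)
        _ = T₂ := mul_one _
  have hLd : ∀ k, ‖Ls (k+1) - Ls k‖ ≤ (K * c * T₁) * (1/2)^k := by
    intro k
    have : Ls (k+1) - Ls k = -(A (Ms k - 1) * Ls k) := by
      rw [hLsS, sub_mul, one_mul, sub_sub_cancel_left]
    rw [this, norm_neg]
    calc ‖A (Ms k - 1) * Ls k‖ ≤ ‖A (Ms k - 1)‖ * ‖Ls k‖ := norm_mul_le _ _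
      _ ≤ (K * c * (1/2)^k) * T₁ := mul_le_mul (hAk k) (hLn k) (norm_nonneg _) (by positivity)
      _ = (K * c * T₁) * (1/2)^k := by ring
  have hRd : ∀ k, ‖Rs (k+1) - Rs k‖ ≤ (K * c * T₂) * (1/2)^k := by
    intro k
    have : Rs (k+1) - Rs k = -(Rs k * B (Ms k - 1)) := by
      rw [hRsS, mul_sub, mul_one, sub_sub_cancel_left]
    rw [this, norm_neg]
    calc ‖Rs k * B (Ms k - 1)‖ ≤ ‖Rs k‖ * ‖B (Ms k - 1)‖ := norm_mul_le _ _
      _ ≤ T₂ * (K * c * (1/2)^k) := mul_le_mul (hRn k) (hBk k) (norm_nonneg _) (by linarith)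
      _ = (K * c * T₂) * (1/2)^k := by ring
  have hLone : ∀ k, ‖Ls k - 1‖ ≤ K * c * T₁ := by
    intro k
    induction k with
    | zero => simp [hLs0]; positivity
    | succ k ih =>
      have : Ls (k+1) - 1 = (Ls k - 1) + (Ls (k+1) - Ls k) :=
        (sub_add_sub_cancel' (Ls k) 1 (Ls (k+1))).symm
      rw [this]
      refine (mnorm_add_le_max _ _).trans (max_le ih ((hLd k).trans ?_))
      nlinarith [pow_le_one₀ (le_of_lt half_pos) (show (1:ℝ)/2 ≤ 1 by norm_num) (n := k),
        mul_pos (mul_pos hKpos hc) (lt_of_lt_of_le one_pos hT₁)]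
  have hRone : ∀ k, ‖Rs k - 1‖ ≤ K * c * T₂ := by
    intro k
    induction k with
    | zero => simp [hRs0]; positivity
    | succ k ih =>
      have : Rs (k+1) - 1 = (Rs k - 1) + (Rs (k+1) - Rs k) :=
        (sub_add_sub_cancel' (Rs k) 1 (Rs (k+1))).symm
      rw [this]
      refine (mnorm_add_le_max _ _).trans (max_le ih ((hRd k).trans ?_))
      nlinarith [pow_le_one₀ (le_of_lt half_pos) (show (1:ℝ)/2 ≤ 1 by norm_num) (n := k),
        mul_pos (mul_pos hKpos hc) (lt_of_lt_of_le one_pos hT₂)]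
  -- limits
  have hLcauchy : CauchySeq Ls := cauchySeq_of_le_geometric (1/2) (K * c * T₁)
    (by norm_num) (fun k => by rw [dist_eq_norm, norm_sub_rev]; exact hLd k)
  have hRcauchy : CauchySeq Rs := cauchySeq_of_le_geometric (1/2) (K * c * T₂)
    (by norm_num) (fun k => by rw [dist_eq_norm, norm_sub_rev]; exact hRd k)
  obtain ⟨L, hL⟩ := cauchySeq_tendsto_of_complete hLcauchy
  obtain ⟨Rlim, hR⟩ := cauchySeq_tendsto_of_complete hRcauchy
  have hLlim1 : ‖L - 1‖ ≤ K * c * T₁ := by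
    refine le_of_tendsto ((hL.sub tendsto_const_nhds).norm) (Eventually.of_forall hLone)
  have hRlim1 : ‖Rlim - 1‖ ≤ K * c * T₂ := by
    refine le_of_tendsto ((hR.sub tendsto_const_nhds).norm) (Eventually.of_forall hRone)
  have hLlt : ‖(1 : Matrix (Fin n) (Fin n) R₁) - L‖ < 1 := by
    rw [norm_sub_rev]; exact lt_of_le_of_lt hLlim1 (by linarith [hcT₁])
  have hRlt : ‖(1 : Matrix (Fin n) (Fin n) R₂) - Rlim‖ < 1 := by
    rw [norm_sub_rev]; exact lt_of_le_of_lt hRlim1 (by linarith [hcT₂])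
  haveI : HasSummableGeomSeries (Matrix (Fin n) (Fin n) R₁) :=
    @instHasSummableGeomSeriesOfCompleteSpace _ NR₁ (by exact (inferInstance : CompleteSpace (Fin n → Fin n → R₁)))
  haveI : HasSummableGeomSeries (Matrix (Fin n) (Fin n) R₂) :=
    @instHasSummableGeomSeriesOfCompleteSpace _ NR₂ (by exact (inferInstance : CompleteSpace (Fin n → Fin n → R₂)))
  set u₁ : (Matrix (Fin n) (Fin n) R₁)ˣ := Units.oneSub (1 - L) hLlt with hu₁def
  set u₂ : (Matrix (Fin n) (Fin n) R₂)ˣ := Units.oneSub (1 - Rlim) hRlt with hu₂def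
  have hu₁ : u₁.val = L := by
    rw [hu₁def, Units.val_oneSub, sub_sub_cancel]
  have hu₂ : u₂.val = Rlim := by
    rw [hu₂def, Units.val_oneSub, sub_sub_cancel]
  -- product formula
  have hfact : ∀ k, Ms k = (Ls k).map f₁ * M * (Rs k).map f₂ := by
    intro k
    induction k with
    | zero =>
      rw [hMs0, hLs0, hRs0]
      rw [show ((1 : Matrix (Fin n) (Fin n) R₁).map f₁) = 1 from
          Matrix.map_one _ f₁.map_zero f₁.map_one,
        show ((1 : Matrix (Fin n) (Fin n) R₂).map f₂) = 1 from
          Matrix.map_one _ f₂.map_zero f₂.map_one, one_mul, mul_one]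
    | succ k ih =>
      rw [hMsS, hLsS, hRsS]
      show (1 - (A (Ms k - 1)).map f₁) * Ms k * (1 - (B (Ms k - 1)).map f₂) = _
      rw [ih]
      simp only [← RingHom.mapMatrix_apply, map_mul, map_sub, map_one]
      simp only [mul_assoc]
  -- passing to the limit
  have hMstend : Tendsto Ms atTop (nhds 1) := by
    refine tendsto_iff_dist_tendsto_zero.2 ?_
    refine squeeze_zero (g := fun k => c * (1/2)^k) (fun k => dist_nonneg) (fun k => ?_) ?_
    · rw [dist_eq_norm]; exact hMk k
    · have := (tendsto_pow_atTop_nhds_zero_of_lt_one (by norm_num : (0:ℝ) ≤ 1/2)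
        (by norm_num : (1:ℝ)/2 < 1)).const_mul c
      simpa using this
  have hLmap : Tendsto (fun k => (Ls k).map f₁) atTop (nhds (L.map f₁)) := by
    refine tendsto_iff_dist_tendsto_zero.2 ?_
    refine squeeze_zero (g := fun k => K * dist (Ls k) L) (fun k => dist_nonneg) (fun k => ?_)
      (by simpa using (tendsto_iff_dist_tendsto_zero.1 hL).const_mul K)
    rw [dist_eq_norm, dist_eq_norm]
    calc ‖(Ls k).map f₁ - L.map f₁‖ = ‖(Ls k - L).map f₁‖ := by
          simp only [← RingHom.mapMatrix_apply, ← map_sub]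
      _ ≤ K * ‖Ls k - L‖ := mnorm_map_le f₁ hKpos.le hf₁ _
  have hRmap : Tendsto (fun k => (Rs k).map f₂) atTop (nhds (Rlim.map f₂)) := by
    refine tendsto_iff_dist_tendsto_zero.2 ?_
    refine squeeze_zero (g := fun k => K * dist (Rs k) Rlim) (fun k => dist_nonneg) (fun k => ?_)
      (by simpa using (tendsto_iff_dist_tendsto_zero.1 hR).const_mul K)
    rw [dist_eq_norm, dist_eq_norm]
    calc ‖(Rs k).map f₂ - Rlim.map f₂‖ = ‖(Rs k - Rlim).map f₂‖ := by
          simp only [← RingHom.mapMatrix_apply, ← map_sub]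
      _ ≤ K * ‖Rs k - Rlim‖ := mnorm_map_le f₂ hKpos.le hf₂ _
  have hprod : Tendsto (fun k => (Ls k).map f₁ * M * (Rs k).map f₂) atTop
      (nhds (L.map f₁ * M * Rlim.map f₂)) := (hLmap.mul tendsto_const_nhds).mul hRmap
  have heq : L.map f₁ * M * Rlim.map f₂ = 1 := by
    have h1 : (fun k => (Ls k).map f₁ * M * (Rs k).map f₂) = Ms := funext fun k => (hfact k).symm
    rw [h1] at hprod
    exact tendsto_nhds_unique hprod hMstend
  -- assembling
  refine ⟨u₁⁻¹, u₂⁻¹, ?_⟩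
  set U₁ : (Matrix (Fin n) (Fin n) G)ˣ := Units.map f₁.mapMatrix.toMonoidHom u₁ with hU₁def
  set U₂ : (Matrix (Fin n) (Fin n) G)ˣ := Units.map f₂.mapMatrix.toMonoidHom u₂ with hU₂def
  have hU₁ : U₁.val = L.map f₁ := by
    rw [hU₁def]
    simp [Units.coe_map, hu₁]
  have hU₂ : U₂.val = Rlim.map f₂ := by
    rw [hU₂def]
    simp [Units.coe_map, hu₂]
  have heq' : U₁.val * M * U₂.val = 1 := by
    rw [hU₁, hU₂]; exact heq
  have hMfin : M = (U₁⁻¹).val * (U₂⁻¹).val := by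
    calc M = (M * U₂.val) * (U₂⁻¹).val := (Units.mul_inv_cancel_right M U₂).symm
      _ = (U₁⁻¹).val * (U₁.val * (M * U₂.val)) * (U₂⁻¹).val := by
          rw [Units.inv_mul_cancel_left]
      _ = (U₁⁻¹).val * (U₁.val * M * U₂.val) * (U₂⁻¹).val := by
          rw [mul_assoc U₁.val M U₂.val]
      _ = (U₁⁻¹).val * (1 : Matrix (Fin n) (Fin n) G) * (U₂⁻¹).val := by rw [heq']
      _ = (U₁⁻¹).val * (U₂⁻¹).val := by rw [mul_one]
  rw [hMfin, hU₁def, hU₂def, Units.coe_map_inv, Units.coe_map_inv]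
  rfl

end Stmt5Aux

/-- after Kedlaya–Liu [KL15, Lemma 2.7.1], matrix factorization.
Let `f₁ : R₁ → Γ` and `f₂ : R₂ → Γ` be bounded homomorphisms of (possibly
noncommutative) nonarchimedean Banach rings such that the sum map
`R₁ ⊕ R₂ → Γ`, `(a,b) ↦ f₁ a + f₂ b`, is strictly surjective.  Then there is a
constant `c > 0` such that for every `n ≥ 1` and every invertible matrix
`I ∈ GL_n(Γ)` with `‖I − 1‖ ≤ c` (entrywise supremum norm), there are
invertible matrices `I₁ ∈ GL_n(R₁)` and `I₂ ∈ GL_n(R₂)` with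
`I = f₁(I₁)·f₂(I₂)`. -/
theorem stmt5 {R₁ R₂ G : Type*} [NormedRing R₁] [NormedRing R₂] [NormedRing G]
    [CompleteSpace R₁] [CompleteSpace R₂] [CompleteSpace G]
    [IsUltrametricDist R₁] [IsUltrametricDist R₂] [IsUltrametricDist G]
    (f₁ : R₁ →+* G) (f₂ : R₂ →+* G)
    (hb₁ : ∃ C : ℝ, ∀ x, ‖f₁ x‖ ≤ C * ‖x‖)
    (hb₂ : ∃ C : ℝ, ∀ x, ‖f₂ x‖ ≤ C * ‖x‖)
    (hstrict : ∃ c₀ : ℝ, 0 < c₀ ∧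
      ∀ γ : G, ∃ a b, f₁ a + f₂ b = γ ∧ ‖a‖ ≤ c₀ * ‖γ‖ ∧ ‖b‖ ≤ c₀ * ‖γ‖) :
    ∃ c : ℝ, 0 < c ∧ ∀ n : ℕ, 1 ≤ n → ∀ I : Matrix (Fin n) (Fin n) G, IsUnit I →
      (∀ i j, ‖(I - 1) i j‖ ≤ c) →
      ∃ (I₁ : (Matrix (Fin n) (Fin n) R₁)ˣ) (I₂ : (Matrix (Fin n) (Fin n) R₂)ˣ),
        I = (I₁.val.map f₁) * (I₂.val.map f₂) := by
  obtain ⟨C₁, hC₁⟩ := hb₁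
  obtain ⟨C₂, hC₂⟩ := hb₂
  obtain ⟨c₀, hc₀pos, hc₀⟩ := hstrict
  set K : ℝ := max (max (max C₁ C₂) c₀) 1 with hKdef
  have hK : 1 ≤ K := le_max_right _ _
  have hKpos : (0 : ℝ) < K := lt_of_lt_of_le one_pos hK
  have hf₁ : ∀ x, ‖f₁ x‖ ≤ K * ‖x‖ := fun x => (hC₁ x).trans
    (mul_le_mul_of_nonneg_right
      (le_max_of_le_left (le_max_of_le_left (le_max_left _ _))) (norm_nonneg x))
  have hf₂ : ∀ x, ‖f₂ x‖ ≤ K * ‖x‖ := fun x => (hC₂ x).trans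
    (mul_le_mul_of_nonneg_right
      (le_max_of_le_left (le_max_of_le_left (le_max_right _ _))) (norm_nonneg x))
  have hlift : ∀ γ : G, ∃ a b, f₁ a + f₂ b = γ ∧ ‖a‖ ≤ K * ‖γ‖ ∧ ‖b‖ ≤ K * ‖γ‖ := by
    intro γ
    obtain ⟨a, b, h1, h2, h3⟩ := hc₀ γ
    refine ⟨a, b, h1, h2.trans ?_, h3.trans ?_⟩ <;>
      exact mul_le_mul_of_nonneg_right (le_max_of_le_left (le_max_right _ _)) (norm_nonneg γ)
  set T : ℝ := max (max ‖(1 : R₁)‖ ‖(1 : R₂)‖) 1 with hTdef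
  have hT : (1 : ℝ) ≤ T := le_max_right _ _
  have hTpos : (0 : ℝ) < T := lt_of_lt_of_le one_pos hT
  have hK6 : (1 : ℝ) ≤ K ^ 6 := one_le_pow₀ hK
  have hK6pos : (0 : ℝ) < K ^ 6 := lt_of_lt_of_le one_pos hK6
  set c : ℝ := min (1 / (2 * K ^ 6)) (1 / (2 * K * T)) with hcdef
  have hcpos : 0 < c := lt_min (by positivity) (by positivity)
  have hc1 : c ≤ 1 := by
    refine (min_le_left _ _).trans ?_
    rw [div_le_one (by positivity)]
    linarith
  have hdc : K ^ 6 * c ≤ 1 / 2 := by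
    have h := min_le_left (1 / (2 * K ^ 6)) (1 / (2 * K * T))
    calc K ^ 6 * c ≤ K ^ 6 * (1 / (2 * K ^ 6)) :=
          mul_le_mul_of_nonneg_left h (by positivity)
      _ = 1 / 2 := by field_simp
  have hcT : K * c * T ≤ 1 / 2 := by
    have h := min_le_right (1 / (2 * K ^ 6)) (1 / (2 * K * T))
    calc K * c * T ≤ K * (1 / (2 * K * T)) * T := by
          refine mul_le_mul_of_nonneg_right (mul_le_mul_of_nonneg_left h hKpos.le) hTpos.le
      _ = 1 / 2 := by field_simp
  have hT₁ : max ‖(1 : R₁)‖ 1 ≤ T :=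
    max_le (le_max_of_le_left (le_max_left _ _)) hT
  have hT₂ : max ‖(1 : R₂)‖ 1 ≤ T :=
    max_le (le_max_of_le_left (le_max_right _ _)) hT
  have hKc : (0 : ℝ) ≤ K * c := by positivity
  refine ⟨c, hcpos, fun n _ I _ hIc => ?_⟩
  exact Stmt5Aux.main f₁ f₂ K c hK hf₁ hf₂ hlift hcpos hc1 hdc
    ((mul_le_mul_of_nonneg_left hT₁ hKc).trans hcT)
    ((mul_le_mul_of_nonneg_left hT₂ hKc).trans hcT) n I hIc
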